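/- Suppose the matrix A ∈ ℝ^{m×n} satisfies the ℓ2 group robust null space property of order k with constants ρ ∈ (0,1) and τ ≥ 0. Let x ∈ ℝⁿ, let y = Ax + η with ‖η‖₂ ≤ ε, and let x̂ be any minimizer of ‖z‖₁ over z ∈ ℝⁿ subject to ‖Az − y‖₂ ≤ ε. Then for every p ∈ [1,2], the residual h = x̂ − x satisfies ‖h‖_p ≤ (2/(1−ρ))·{ [ρ/k^{1−1/p} + (1+ρ)]·σ_{k,𝒢}(x,‖·‖₁) + (1/k^{1−1/p} + 2)·τε }. -/

import Mathlib

open Finset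

noncomputable section

namespace CS

/-- The ℓ1 norm of a vector. -/
def l1 {d : ℕ} (x : Fin d → ℝ) : ℝ := ∑ i, |x i|

/-- The ℓ2 (Euclidean) norm of a vector. -/
def l2 {d : ℕ} (x : Fin d → ℝ) : ℝ := Real.sqrt (∑ i, (x i) ^ 2)

/-- The ℓp norm of a vector (for real p ≥ 1). -/
def lpnorm {d : ℕ} (p : ℝ) (x : Fin d → ℝ) : ℝ := (∑ i, |x i| ^ p) ^ (1 / p)

/-- `restrict Λ x` agrees with `x` on `Λ` and is zero elsewhere. -/
def restrict {d : ℕ} (Λ : Finset (Fin d)) (x : Fin d → ℝ) : Fin d → ℝ :=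
  fun i => if i ∈ Λ then x i else 0

/-- The support of a vector. -/
def supp {d : ℕ} (x : Fin d → ℝ) : Finset (Fin d) :=
  Finset.univ.filter fun i => x i ≠ 0

/-- `G : Fin g → Finset (Fin n)` is a partition of `{1,…,n}` into `g` (nonempty,
pairwise disjoint) groups covering everything. -/
def IsPartition {n g : ℕ} (G : Fin g → Finset (Fin n)) : Prop :=
  (∀ j, (G j).Nonempty) ∧
  (∀ j j', j ≠ j' → Disjoint (G j) (G j')) ∧
  Finset.univ.biUnion G = Finset.univ

/-- A subset `Λ ⊆ {1,…,n}` is group `k`-sparse: it is a union of groups and has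
cardinality at most `k`. -/
def GroupSparseSet {n g : ℕ} (G : Fin g → Finset (Fin n)) (k : ℕ)
    (Λ : Finset (Fin n)) : Prop :=
  (∃ S : Finset (Fin g), Λ = S.biUnion G) ∧ Λ.card ≤ k

/-- A vector is group `l`-sparse: its support is contained in a union of groups
of total cardinality at most `l`. -/
def GroupSparseVec {n g : ℕ} (G : Fin g → Finset (Fin n)) (l : ℕ)
    (z : Fin n → ℝ) : Prop :=
  ∃ S : Finset (Fin g), supp z ⊆ S.biUnion G ∧ (S.biUnion G).card ≤ l

/-- The group restricted isometry property of order `l` with constant `δ`. -/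
def GRIP {m n g : ℕ} (A : Matrix (Fin m) (Fin n) ℝ) (G : Fin g → Finset (Fin n))
    (l : ℕ) (δ : ℝ) : Prop :=
  ∀ z : Fin n → ℝ, GroupSparseVec G l z →
    (1 - δ) * (l2 z) ^ 2 ≤ (l2 (A.mulVec z)) ^ 2 ∧
    (l2 (A.mulVec z)) ^ 2 ≤ (1 + δ) * (l2 z) ^ 2

/-- The ℓ2 group robust null space property of order `k`
with constants `ρ`, `τ`. -/
def GRNSP {m n g : ℕ} (A : Matrix (Fin m) (Fin n) ℝ) (G : Fin g → Finset (Fin n))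
    (k : ℕ) (ρ τ : ℝ) : Prop :=
  ∀ (h : Fin n → ℝ) (Λ : Finset (Fin n)), GroupSparseSet G k Λ →
    l2 (restrict Λ h) ≤
      ρ / Real.sqrt k * l1 (restrict Λᶜ h) + τ / Real.sqrt k * l2 (A.mulVec h)

/-- The group `k`-sparsity index of `x` with respect to the ℓ1 norm:
`σ_{k,𝒢}(x, ‖·‖₁) = min_{Λ ∈ GkS} ‖x − x_Λ‖₁ = min_{Λ ∈ GkS} ‖x_{Λᶜ}‖₁`. -/
def gIndex {n g : ℕ} (G : Fin g → Finset (Fin n)) (k : ℕ) (x : Fin n → ℝ) : ℝ :=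
  sInf {r | ∃ Λ : Finset (Fin n), GroupSparseSet G k Λ ∧ r = l1 (restrict Λᶜ x)}

/-- The (conventional) restricted isometry property of order `l`
with constant `δ`. -/
def RIP {m n : ℕ} (A : Matrix (Fin m) (Fin n) ℝ) (l : ℕ) (δ : ℝ) : Prop :=
  ∀ u : Fin n → ℝ, (supp u).card ≤ l →
    (1 - δ) * (l2 u) ^ 2 ≤ (l2 (A.mulVec u)) ^ 2 ∧
    (l2 (A.mulVec u)) ^ 2 ≤ (1 + δ) * (l2 u) ^ 2

/-- The (conventional) `k`-sparsity index
`σ_k(x, ‖·‖₁) = min_{z k-sparse} ‖x − z‖₁`. -/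
def sIndex {n : ℕ} (k : ℕ) (x : Fin n → ℝ) : ℝ :=
  sInf {r | ∃ z : Fin n → ℝ, (supp z).card ≤ k ∧ r = l1 (x - z)}

/-- The group support of `v`: the set of groups on which `v` is nonzero. -/
def Gsupp {n g : ℕ} (G : Fin g → Finset (Fin n)) (v : Fin n → ℝ) :
    Finset (Fin g) :=
  Finset.univ.filter fun j => restrict (G j) v ≠ 0

-- ===== auxiliary lemmas =====


lemma l1_nonneg {d : ℕ} (v : Fin d → ℝ) : 0 ≤ l1 v :=
  Finset.sum_nonneg fun _ _ => abs_nonneg _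

lemma l2_nonneg {d : ℕ} (v : Fin d → ℝ) : 0 ≤ l2 v := Real.sqrt_nonneg _

lemma l1_restrict {d : ℕ} (t : Finset (Fin d)) (v : Fin d → ℝ) :
    l1 (restrict t v) = ∑ i ∈ t, |v i| := by
  have : ∀ i, |restrict t v i| = if i ∈ t then |v i| else 0 := by
    intro i; unfold restrict; split <;> simp
  unfold l1
  simp only [this, Finset.sum_ite_mem, Finset.univ_inter]

lemma l2_restrict {d : ℕ} (t : Finset (Fin d)) (v : Fin d → ℝ) :
    l2 (restrict t v) = Real.sqrt (∑ i ∈ t, (v i) ^ 2) := by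
  have : ∀ i, (restrict t v i) ^ 2 = if i ∈ t then (v i) ^ 2 else 0 := by
    intro i; unfold restrict; split <;> simp
  unfold l2
  simp only [this, Finset.sum_ite_mem, Finset.univ_inter]

lemma l2_eq_norm {d : ℕ} (v : Fin d → ℝ) :
    l2 v = ‖(WithLp.equiv 2 (Fin d → ℝ)).symm v‖ := by
  rw [EuclideanSpace.norm_eq]
  unfold l2
  congr 1
  apply Finset.sum_congr rfl
  intro i _
  show v i ^ 2 = ‖v i‖ ^ 2
  rw [Real.norm_eq_abs, sq_abs]

lemma l2_add_le {d : ℕ} (u v : Fin d → ℝ) : l2 (u + v) ≤ l2 u + l2 v := by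
  rw [l2_eq_norm, l2_eq_norm, l2_eq_norm]
  simpa using norm_add_le ((WithLp.equiv 2 (Fin d → ℝ)).symm u)
    ((WithLp.equiv 2 (Fin d → ℝ)).symm v)

lemma l2_neg {d : ℕ} (v : Fin d → ℝ) : l2 (-v) = l2 v := by
  unfold l2; simp

lemma sum_abs_le_sqrt_card {d : ℕ} (t : Finset (Fin d)) (v : Fin d → ℝ) :
    ∑ i ∈ t, |v i| ≤ Real.sqrt t.card * Real.sqrt (∑ i ∈ t, (v i) ^ 2) := by
  have h1 : (∑ i ∈ t, |v i|) ^ 2 ≤ (∑ _i ∈ t, (1:ℝ) ^ 2) * (∑ i ∈ t, |v i| ^ 2) := by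
    simpa using Finset.sum_mul_sq_le_sq_mul_sq t (fun _ => (1:ℝ)) (fun i => |v i|)
  have h2 : (∑ i ∈ t, |v i|) ^ 2 ≤ (t.card : ℝ) * (∑ i ∈ t, (v i) ^ 2) := by
    simpa [sq_abs] using h1
  calc ∑ i ∈ t, |v i| = Real.sqrt ((∑ i ∈ t, |v i|) ^ 2) :=
        (Real.sqrt_sq (Finset.sum_nonneg fun i _ => abs_nonneg _)).symm
    _ ≤ Real.sqrt ((t.card : ℝ) * (∑ i ∈ t, (v i) ^ 2)) := Real.sqrt_le_sqrt h2
    _ = Real.sqrt t.card * Real.sqrt (∑ i ∈ t, (v i) ^ 2) := Real.sqrt_mul (by positivity) _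

lemma rpow_add_le_add_rpow_real {a b q : ℝ} (ha : 0 ≤ a) (hb : 0 ≤ b)
    (hq : 0 ≤ q) (hq1 : q ≤ 1) : (a + b) ^ q ≤ a ^ q + b ^ q := by
  lift a to NNReal using ha
  lift b to NNReal using hb
  have := NNReal.rpow_add_le_add_rpow a b hq hq1
  exact_mod_cast this

lemma lp_le_l1_finset {d : ℕ} (s : Finset (Fin d)) (v : Fin d → ℝ) {p : ℝ} (hp : 1 ≤ p) :
    (∑ i ∈ s, |v i| ^ p) ^ (1/p) ≤ ∑ i ∈ s, |v i| := by
  have hp0 : 0 < p := lt_of_lt_of_le one_pos hp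
  have key : ∑ i ∈ s, |v i| ^ p ≤ (∑ i ∈ s, |v i|) ^ p := by
    have hS : 0 ≤ ∑ i ∈ s, |v i| := Finset.sum_nonneg fun i _ => abs_nonneg _
    rcases eq_or_lt_of_le hS with hS0 | hSpos
    · have : ∀ i ∈ s, |v i| = 0 := by
        intro i hi
        have := Finset.sum_eq_zero_iff_of_nonneg (fun i _ => abs_nonneg (v i)) |>.mp hS0.symm
        exact this i hi
      rw [Finset.sum_congr rfl (fun i hi => by rw [this i hi, Real.zero_rpow hp0.ne'])]
      simp [Real.zero_rpow hp0.ne', ← hS0]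
    · have hne : (1:ℝ) + (p - 1) ≠ 0 := by
        rw [show (1:ℝ) + (p-1) = p by ring]; exact hp0.ne'
      calc ∑ i ∈ s, |v i| ^ p ≤ ∑ i ∈ s, |v i| * (∑ j ∈ s, |v j|) ^ (p - 1) := by
            apply Finset.sum_le_sum
            intro i hi
            have h1 : |v i| ^ p = |v i| ^ (1:ℝ) * |v i| ^ (p-1) := by
              rw [← Real.rpow_add' (abs_nonneg _) hne]; norm_num
            rw [h1, Real.rpow_one]
            apply mul_le_mul_of_nonneg_left _ (abs_nonneg _)
            exact Real.rpow_le_rpow (abs_nonneg _)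
              (Finset.single_le_sum (fun j _ => abs_nonneg (v j)) hi) (by linarith)
        _ = (∑ i ∈ s, |v i|) ^ p := by
            rw [← Finset.sum_mul, ← Real.rpow_one_add' (le_of_lt hSpos) hne]
            norm_num
  calc (∑ i ∈ s, |v i| ^ p) ^ (1/p) ≤ ((∑ i ∈ s, |v i|) ^ p) ^ (1/p) :=
        Real.rpow_le_rpow (Finset.sum_nonneg fun i _ => Real.rpow_nonneg (abs_nonneg _) _)
          key (by positivity)
    _ = ∑ i ∈ s, |v i| := by
        rw [← Real.rpow_mul (Finset.sum_nonneg fun i _ => abs_nonneg _)]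
        rw [mul_one_div, div_self hp0.ne', Real.rpow_one]

lemma lp_le_card_rpow_mul_l2_finset {d : ℕ} (t : Finset (Fin d)) (v : Fin d → ℝ) {p : ℝ}
    (hp1 : 1 ≤ p) (hp2 : p ≤ 2) :
    (∑ i ∈ t, |v i| ^ p) ^ (1/p) ≤
      (t.card : ℝ) ^ (1/p - 1/2) * Real.sqrt (∑ i ∈ t, (v i) ^ 2) := by
  have hp0 : 0 < p := lt_of_lt_of_le one_pos hp1
  have hq1 : 1 ≤ 2/p := by rw [le_div_iff₀ hp0]; linarith
  have key := Real.inner_le_weight_mul_Lp_of_nonneg t hq1 (fun _ => (1:ℝ))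
    (fun i => |v i| ^ p) (fun _ => zero_le_one)
    (fun i => Real.rpow_nonneg (abs_nonneg _) _)
  simp only [one_mul] at key
  have hinv : (2/p)⁻¹ = p/2 := by rw [inv_div]
  have hpne : p ≠ 0 := hp0.ne'
  have hpow : ∀ i : Fin d, (|v i| ^ p) ^ (2/p) = (v i) ^ 2 := fun i => by
    rw [← Real.rpow_mul (abs_nonneg _), show p * (2/p) = ((2:ℕ):ℝ) by field_simp; norm_num,
      Real.rpow_natCast, sq_abs]
  rw [Finset.sum_congr rfl (fun i _ => hpow i)] at key
  have hS1 : (∑ _i ∈ t, (1:ℝ)) = (t.card : ℝ) := by simp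
  rw [hS1, hinv] at key
  have hL0 : 0 ≤ ∑ i ∈ t, |v i| ^ p :=
    Finset.sum_nonneg fun i _ => Real.rpow_nonneg (abs_nonneg _) _
  have hQ0 : (0:ℝ) ≤ ∑ i ∈ t, (v i) ^ 2 := Finset.sum_nonneg fun i _ => sq_nonneg _
  have step := Real.rpow_le_rpow hL0 key (by positivity : (0:ℝ) ≤ 1/p)
  calc (∑ i ∈ t, |v i| ^ p) ^ (1/p)
      ≤ ((t.card : ℝ) ^ (1 - p/2) * (∑ i ∈ t, (v i)^2) ^ (p/2)) ^ (1/p) := step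
    _ = (t.card : ℝ) ^ (1/p - 1/2) * Real.sqrt (∑ i ∈ t, (v i) ^ 2) := by
        rw [Real.mul_rpow (Real.rpow_nonneg (Nat.cast_nonneg _) _) (Real.rpow_nonneg hQ0 _),
          ← Real.rpow_mul (Nat.cast_nonneg _), ← Real.rpow_mul hQ0,
          Real.sqrt_eq_rpow]
        rw [show (1 - p/2) * (1/p) = 1/p - 1/2 by
            rw [sub_mul, one_mul, div_mul_div_comm, mul_one, mul_comm 2 p,
              div_mul_cancel_left₀ hpne]; norm_num,
          show (p/2) * (1/p) = 1/2 by
            rw [div_mul_div_comm, mul_one, mul_comm 2 p, div_mul_cancel_left₀ hpne]; norm_num]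


/-- **ℓp error bounds, `p ∈ [1,2]`, under the group robust null
space property.** -/
theorem lp_error_bound {n m g k : ℕ}
    (G : Fin g → Finset (Fin n)) (hG : IsPartition G)
    (hGk : ∀ j, (G j).card ≤ k)
    (A : Matrix (Fin m) (Fin n) ℝ)
    (ρ τ : ℝ) (hρ0 : 0 < ρ) (hρ1 : ρ < 1) (hτ : 0 ≤ τ)
    (hA : GRNSP A G k ρ τ)
    (x : Fin n → ℝ) (η : Fin m → ℝ) (ε : ℝ) (hη : l2 η ≤ ε)
    (y : Fin m → ℝ) (hy : y = A.mulVec x + η)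
    (xhat : Fin n → ℝ)
    (hfeas : l2 (A.mulVec xhat - y) ≤ ε)
    (hopt : ∀ z : Fin n → ℝ, l2 (A.mulVec z - y) ≤ ε → l1 xhat ≤ l1 z) :
    ∀ p : ℝ, 1 ≤ p → p ≤ 2 →
      lpnorm p (xhat - x) ≤
        2 / (1 - ρ) *
          ((ρ / (k : ℝ) ^ (1 - 1 / p) + (1 + ρ)) * gIndex G k x +
            (1 / (k : ℝ) ^ (1 - 1 / p) + 2) * τ * ε) := by
  intro p hp1 hp2
  have hp0 : 0 < p := lt_of_lt_of_le one_pos hp1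
  have hε : 0 ≤ ε := le_trans (l2_nonneg η) hη
  have h1ρ : (0:ℝ) < 1 - ρ := by linarith
  -- the minimizing group-sparse set
  have hne : Set.Nonempty
      {r | ∃ Λ : Finset (Fin n), GroupSparseSet G k Λ ∧ r = l1 (restrict Λᶜ x)} :=
    ⟨_, ∅, ⟨⟨∅, by simp⟩, by simp⟩, rfl⟩
  have hfin : Set.Finite
      {r | ∃ Λ : Finset (Fin n), GroupSparseSet G k Λ ∧ r = l1 (restrict Λᶜ x)} := by
    apply Set.Finite.subset (Set.finite_range (fun Λ : Finset (Fin n) => l1 (restrict Λᶜ x)))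
    rintro r ⟨Λ, -, rfl⟩
    exact ⟨Λ, rfl⟩
  obtain ⟨Λ, hΛgs, hΛval⟩ := hne.csInf_mem hfin
  have hgi : gIndex G k x = l1 (restrict Λᶜ x) := hΛval
  have hσ0 : 0 ≤ l1 (restrict Λᶜ x) := l1_nonneg _
  set σ := l1 (restrict Λᶜ x) with hσdef
  -- the measurement error
  set E := l2 (A.mulVec (xhat - x)) with hEdef
  have hE0 : 0 ≤ E := l2_nonneg _
  have hAh : A.mulVec (xhat - x) = (A.mulVec xhat - y) + η := by
    rw [Matrix.mulVec_sub, hy]; funext i; simp; ring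
  have hE2 : E ≤ 2 * ε := by
    rw [hEdef, hAh]
    calc l2 ((A.mulVec xhat - y) + η) ≤ l2 (A.mulVec xhat - y) + l2 η := l2_add_le _ _
      _ ≤ ε + ε := add_le_add hfeas hη
      _ = 2 * ε := by ring
  -- optimality
  have hopt' : l1 xhat ≤ l1 x := by
    apply hopt
    rw [hy, show A.mulVec x - (A.mulVec x + η) = -η by funext i; simp, l2_neg]
    exact hη
  -- cone-type inequality from optimality
  have hM2 : ∑ i ∈ Λᶜ, |(xhat - x) i| ≤ (∑ i ∈ Λ, |(xhat - x) i|) + 2 * σ := by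
    have f1 : ∑ i ∈ Λ, |x i| - ∑ i ∈ Λ, |xhat i| ≤ ∑ i ∈ Λ, |(xhat - x) i| := by
      rw [← Finset.sum_sub_distrib]
      apply Finset.sum_le_sum
      intro i _
      have h := abs_sub_abs_le_abs_sub (x i) (xhat i)
      rw [abs_sub_comm] at h
      simpa using h
    have f2 : ∑ i ∈ Λᶜ, |(xhat - x) i| - ∑ i ∈ Λᶜ, |x i| ≤ ∑ i ∈ Λᶜ, |xhat i| := by
      rw [← Finset.sum_sub_distrib]
      apply Finset.sum_le_sum
      intro i _
      have h := abs_sub (xhat i) (x i)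
      simp only [Pi.sub_apply]
      linarith
    have s1 : (∑ i ∈ Λ, |xhat i|) + ∑ i ∈ Λᶜ, |xhat i| = l1 xhat :=
      Finset.sum_add_sum_compl Λ _
    have s2 : (∑ i ∈ Λ, |x i|) + ∑ i ∈ Λᶜ, |x i| = l1 x :=
      Finset.sum_add_sum_compl Λ _
    have s3 : σ = ∑ i ∈ Λᶜ, |x i| := by rw [hσdef, l1_restrict]
    linarith
  -- apply the null space property
  have hNSP := hA (xhat - x) Λ hΛgs
  rcases Nat.eq_zero_or_pos k with hk0 | hkpos
  · -- degenerate case k = 0 forces n = 0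
    have hn : n = 0 := by
      by_contra hn0
      have hpos : 0 < n := Nat.pos_of_ne_zero hn0
      have : (⟨0, hpos⟩ : Fin n) ∈ Finset.univ.biUnion G := by
        rw [hG.2.2]; exact Finset.mem_univ _
      obtain ⟨j, -, hij⟩ := Finset.mem_biUnion.mp this
      have h1 : 1 ≤ (G j).card := Finset.card_pos.mpr ⟨_, hij⟩
      have h2 := hGk j
      omega
    subst hn
    have hlhs : lpnorm p (xhat - x) = 0 := by
      unfold lpnorm
      rw [show (∑ i : Fin 0, |(xhat - x) i| ^ p) = 0 by simp,
        Real.zero_rpow (by positivity : 1/p ≠ 0)]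
    rw [hlhs, hgi]
    apply mul_nonneg (by positivity)
    apply add_nonneg
    · apply mul_nonneg _ hσ0
      apply add_nonneg (div_nonneg hρ0.le (Real.rpow_nonneg (Nat.cast_nonneg _) _))
      linarith
    · apply mul_nonneg (mul_nonneg _ hτ) hε
      apply add_nonneg (div_nonneg zero_le_one (Real.rpow_nonneg (Nat.cast_nonneg _) _))
      norm_num
  · -- main case k ≥ 1
    have hk1 : (1:ℝ) ≤ (k:ℝ) := by exact_mod_cast hkpos
    have hkR : (0:ℝ) < (k:ℝ) := by linarith
    have hsk : 0 < Real.sqrt k := Real.sqrt_pos.mpr hkR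
    have hskne : Real.sqrt (k:ℝ) ≠ 0 := hsk.ne'
    set L := l1 (restrict Λᶜ (xhat - x)) with hLdef
    have hL0 : 0 ≤ L := l1_nonneg _
    set D := l2 (restrict Λ (xhat - x)) with hDdef
    have hD0 : 0 ≤ D := l2_nonneg _
    have hLsum : L = ∑ i ∈ Λᶜ, |(xhat - x) i| := by rw [hLdef, l1_restrict]
    -- Cauchy–Schwarz
    have hCS : ∑ i ∈ Λ, |(xhat - x) i| ≤ Real.sqrt k * D := by
      calc ∑ i ∈ Λ, |(xhat - x) i|
          ≤ Real.sqrt Λ.card * Real.sqrt (∑ i ∈ Λ, ((xhat - x) i) ^ 2) :=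
            sum_abs_le_sqrt_card Λ _
        _ ≤ Real.sqrt k * D := by
            rw [hDdef, l2_restrict]
            apply mul_le_mul_of_nonneg_right _ (Real.sqrt_nonneg _)
            exact Real.sqrt_le_sqrt (by exact_mod_cast hΛgs.2)
    -- key ℓ1 bound
    have hfield : Real.sqrt k * (ρ / Real.sqrt k * L + τ / Real.sqrt k * E)
        = ρ * L + τ * E := by field_simp
    have hKey : (1 - ρ) * L ≤ 2 * σ + τ * E := by
      have h2 : Real.sqrt k * D ≤ ρ * L + τ * E := by
        rw [← hfield]
        exact mul_le_mul_of_nonneg_left hNSP hsk.le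
      have h3 : L ≤ Real.sqrt k * D + 2 * σ := by
        rw [hLsum]; linarith [hM2, hCS]
      linarith
    -- ℓp split
    have hsplit : lpnorm p (xhat - x) ≤
        (∑ i ∈ Λ, |(xhat - x) i| ^ p) ^ (1/p) + (∑ i ∈ Λᶜ, |(xhat - x) i| ^ p) ^ (1/p) := by
      unfold lpnorm
      rw [← Finset.sum_add_sum_compl Λ (fun i => |(xhat - x) i| ^ p)]
      exact rpow_add_le_add_rpow_real
        (Finset.sum_nonneg fun i _ => Real.rpow_nonneg (abs_nonneg _) _)
        (Finset.sum_nonneg fun i _ => Real.rpow_nonneg (abs_nonneg _) _)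
        (by positivity) (by rw [div_le_one hp0]; linarith)
    have hpart2 : (∑ i ∈ Λ, |(xhat - x) i| ^ p) ^ (1/p) ≤ (k:ℝ) ^ (1/p - 1/2) * D := by
      calc (∑ i ∈ Λ, |(xhat - x) i| ^ p) ^ (1/p)
          ≤ (Λ.card : ℝ) ^ (1/p - 1/2) * Real.sqrt (∑ i ∈ Λ, ((xhat - x) i) ^ 2) :=
            lp_le_card_rpow_mul_l2_finset Λ _ hp1 hp2
        _ ≤ (k:ℝ) ^ (1/p - 1/2) * D := by
            rw [hDdef, l2_restrict]
            apply mul_le_mul_of_nonneg_right _ (Real.sqrt_nonneg _)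
            apply Real.rpow_le_rpow (Nat.cast_nonneg _) (by exact_mod_cast hΛgs.2)
            rw [sub_nonneg, div_le_div_iff₀ two_pos hp0]
            linarith
    have hpart1 : (∑ i ∈ Λᶜ, |(xhat - x) i| ^ p) ^ (1/p) ≤ L := by
      rw [hLsum]; exact lp_le_l1_finset Λᶜ _ hp1
    -- the constant c
    set c := (k:ℝ) ^ (1/p - 1) with hcdef
    have hc0 : 0 < c := Real.rpow_pos_of_pos hkR _
    have hc1 : c ≤ 1 := by
      apply Real.rpow_le_one_of_one_le_of_nonpos hk1
      rw [sub_nonpos, div_le_one hp0]; linarith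
    have hck : (k:ℝ) ^ (1 - 1/p) = c⁻¹ := by
      rw [hcdef, ← Real.rpow_neg hkR.le, show -(1/p - 1) = 1 - 1/p by ring]
    have hfac : (k:ℝ) ^ (1/p - 1/2) * (ρ / Real.sqrt k * L + τ / Real.sqrt k * E)
        = c * ρ * L + c * τ * E := by
      have hkey2 : (k:ℝ) ^ (1/p - 1/2) / Real.sqrt k = c := by
        rw [Real.sqrt_eq_rpow, ← Real.rpow_sub hkR, hcdef]
        congr 1
        ring
      rw [show (k:ℝ) ^ (1/p - 1/2) * (ρ / Real.sqrt k * L + τ / Real.sqrt k * E)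
          = ((k:ℝ) ^ (1/p - 1/2) / Real.sqrt k) * (ρ * L) +
            ((k:ℝ) ^ (1/p - 1/2) / Real.sqrt k) * (τ * E) by field_simp, hkey2]
      ring
    -- assemble the chain
    have hchain : lpnorm p (xhat - x) ≤ (c * ρ + 1) * L + c * τ * E := by
      have step := mul_le_mul_of_nonneg_left hNSP
        (Real.rpow_nonneg hkR.le (1/p - 1/2) : (0:ℝ) ≤ (k:ℝ) ^ (1/p - 1/2))
      calc lpnorm p (xhat - x)
          ≤ (∑ i ∈ Λ, |(xhat - x) i| ^ p) ^ (1/p) + (∑ i ∈ Λᶜ, |(xhat - x) i| ^ p) ^ (1/p) :=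
            hsplit
        _ ≤ (k:ℝ) ^ (1/p - 1/2) * D + L := add_le_add hpart2 hpart1
        _ ≤ (c * ρ * L + c * τ * E) + L := by
            rw [← hfac]; exact add_le_add_left step L
        _ = (c * ρ + 1) * L + c * τ * E := by ring
    -- final arithmetic
    rw [hgi, hck, show ρ / c⁻¹ = ρ * c by rw [div_eq_mul_inv, inv_inv],
      show (1:ℝ) / c⁻¹ = c by rw [one_div, inv_inv]]
    rw [div_mul_eq_mul_div, le_div_iff₀ h1ρ]
    have t0 : (1 - ρ) * lpnorm p (xhat - x) ≤ (1 - ρ) * ((c * ρ + 1) * L + c * τ * E) :=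
      mul_le_mul_of_nonneg_left hchain h1ρ.le
    have t1 : (c * ρ + 1) * ((1 - ρ) * L) ≤ (c * ρ + 1) * (2 * σ + τ * E) :=
      mul_le_mul_of_nonneg_left hKey (by positivity)
    have t2 : τ * (1 + c) * E ≤ τ * (1 + c) * (2 * ε) :=
      mul_le_mul_of_nonneg_left hE2 (by positivity)
    have t3 : 0 ≤ ρ * σ := mul_nonneg hρ0.le hσ0
    have t4 : 0 ≤ τ * ε := mul_nonneg hτ hε
    clear_value σ E L D c
    clear hne hfin hΛval hNSP hsplit hpart1 hpart2 hM2 hCS hfield hfac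
    linarith [t0, t1, t2, t3, t4]

end CS
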